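/- Let S be an E-unitary inverse semigroup with E = E(S), let s, t ∈ S satisfy σ(s) = σ(t), and let φ be a semi-character of E with φ(s*·s) = true and φ(t*·t) = true. Then φ(s*·e·s) = φ(t*·e·t) for every e ∈ E; that is, s·φ = t·φ. -/

import Mathlib

class InverseSemigroup (S : Type*) extends Semigroup S, StarMul S where
  mul_star_mul_self : ∀ s : S, s * star s * s = s
  star_mul_star_self : ∀ s : S, star s * s * star s = star s
  idem_comm : ∀ e f : S, e * e = e → f * f = f → e * f = f * e

namespace InverseSemigroup

variable {S : Type*} [InverseSemigroup S]

lemma idem_star_mul (s : S) : (star s * s) * (star s * s) = star s * s := by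
  calc (star s * s) * (star s * s) = star s * (s * star s * s) := by
        simp only [mul_assoc]
    _ = star s * s := by rw [mul_star_mul_self]

lemma mul_star_idem (s : S) : (s * star s) * (s * star s) = s * star s := by
  calc (s * star s) * (s * star s) = s * (star s * s * star s) := by
        simp only [mul_assoc]
    _ = s * star s := by rw [star_mul_star_self]

lemma idem_mul {e f : S} (he : e * e = e) (hf : f * f = f) :
    (e * f) * (e * f) = e * f := by
  have hc : f * e = e * f := idem_comm f e hf he
  calc (e * f) * (e * f) = e * (f * e) * f := by simp only [mul_assoc]
    _ = e * (e * f) * f := by rw [hc]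
    _ = (e * e) * (f * f) := by simp only [mul_assoc]
    _ = e * f := by rw [he, hf]

lemma idem_conj {e : S} (he : e * e = e) (s : S) :
    (star s * e * s) * (star s * e * s) = star s * e * s := by
  have hf : (s * star s) * (s * star s) = s * star s := mul_star_idem s
  have hc : e * (s * star s) = (s * star s) * e := idem_comm e _ he hf
  calc (star s * e * s) * (star s * e * s)
      = star s * (e * (s * star s)) * (e * s) := by simp only [mul_assoc]
    _ = star s * ((s * star s) * e) * (e * s) := by rw [hc]
    _ = star s * (s * star s) * (e * e) * s := by simp only [mul_assoc]
    _ = star s * (s * star s) * e * s := by rw [he]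
    _ = (star s * s * star s) * e * s := by simp only [mul_assoc]
    _ = star s * e * s := by rw [star_mul_star_self]

lemma conj_mul {e f : S} (_he : e * e = e) (hf : f * f = f) (s : S) :
    (star s * e * s) * (star s * f * s) = star s * (e * f) * s := by
  have hss : (s * star s) * (s * star s) = s * star s := mul_star_idem s
  have hc : (s * star s) * f = f * (s * star s) := idem_comm _ _ hss hf
  calc (star s * e * s) * (star s * f * s)
      = star s * e * ((s * star s) * f) * s := by simp only [mul_assoc]
    _ = star s * e * (f * (s * star s)) * s := by rw [hc]
    _ = star s * (e * f) * (s * star s * s) := by simp only [mul_assoc]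
    _ = star s * (e * f) * s := by rw [mul_star_mul_self]

lemma conj_ss (s : S) : star s * (s * star s) * s = star s * s := by
  calc star s * (s * star s) * s = (star s * s * star s) * s := by
        simp only [mul_assoc]
    _ = star s * s := by rw [star_mul_star_self]

end InverseSemigroup

open InverseSemigroup

/-- The natural partial order on an inverse semigroup: `s ≤ t` iff `s = t·s*·s`. -/
def nle {S : Type*} [InverseSemigroup S] (s t : S) : Prop := s = t * (star s * s)

/-- `σ(s) = σ(t)` iff `s·e = t·e` for some idempotent `e`. -/
def sigmaEq {S : Type*} [InverseSemigroup S] (s t : S) : Prop :=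
  ∃ e : S, e * e = e ∧ s * e = t * e

/-- `S` is E-unitary if every element above a nonzero idempotent is idempotent. -/
def EUnitary (S : Type*) [InverseSemigroup S] : Prop :=
  ∀ e s : S, e * e = e → nle e s → s * s = s

/-- The semilattice of idempotents of an inverse semigroup. -/
def Idem (S : Type*) [InverseSemigroup S] : Type _ := {e : S // e * e = e}

instance {S : Type*} [InverseSemigroup S] : Mul (Idem S) :=
  ⟨fun e f => ⟨e.1 * f.1, idem_mul e.2 f.2⟩⟩

/-- A semi-character of a semilattice. -/
structure SemiChar (E : Type*) [Mul E] where
  toFun : E → Bool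
  map_mul' : ∀ e f : E, toFun (e * f) = (toFun e && toFun f)
  exists_true : ∃ e : E, toFun e = true

/-- The space `Ê` of semi-characters, with the subspace topology from `Bool^E`. -/
instance {E : Type*} [Mul E] : TopologicalSpace (SemiChar E) :=
  TopologicalSpace.induced (fun χ => χ.toFun) Pi.topologicalSpace

/-- For `e` idempotent, `s*·e·s` is idempotent. -/
def conjIdem {S : Type*} [InverseSemigroup S] (s : S) (e : Idem S) : Idem S :=
  ⟨star s * e.1 * s, idem_conj e.2 s⟩

/-- The semi-character `s·χ` defined by `(s·χ)(e) = χ(s*·e·s)`. -/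
def sDot {S : Type*} [InverseSemigroup S] (s : S) (χ : SemiChar (Idem S))
    (h : χ.toFun ⟨star s * s, idem_star_mul s⟩ = true) : SemiChar (Idem S) where
  toFun e := χ.toFun (conjIdem s e)
  map_mul' e f := by
    have heq : conjIdem s (e * f) = conjIdem s e * conjIdem s f :=
      Subtype.ext (conj_mul e.2 f.2 s).symm
    simp only [heq, χ.map_mul']
  exists_true := ⟨⟨s * star s, mul_star_idem s⟩, by
    have heq : conjIdem s ⟨s * star s, mul_star_idem s⟩
        = (⟨star s * s, idem_star_mul s⟩ : Idem S) := Subtype.ext (conj_ss s)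
    simp only [heq]; exact h⟩

/-- Uniqueness of generalized inverses in an inverse semigroup. -/
lemma invSg_unique {S : Type*} [InverseSemigroup S] {s x y : S}
    (hx1 : s * x * s = s) (hx2 : x * s * x = x)
    (hy1 : s * y * s = s) (hy2 : y * s * y = y) : x = y := by
  have hsx : (s * x) * (s * x) = s * x := by
    calc (s * x) * (s * x) = (s * x * s) * x := by simp only [mul_assoc]
      _ = s * x := by rw [hx1]
  have hsy : (s * y) * (s * y) = s * y := by
    calc (s * y) * (s * y) = (s * y * s) * y := by simp only [mul_assoc]
      _ = s * y := by rw [hy1]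
  have hxs : (x * s) * (x * s) = x * s := by
    calc (x * s) * (x * s) = (x * s * x) * s := by simp only [mul_assoc]
      _ = x * s := by rw [hx2]
  have hys : (y * s) * (y * s) = y * s := by
    calc (y * s) * (y * s) = (y * s * y) * s := by simp only [mul_assoc]
      _ = y * s := by rw [hy2]
  have hA : x = x * (s * y) := by
    calc x = x * s * x := hx2.symm
      _ = x * ((s * y * s) * x) := by rw [hy1]; rw [mul_assoc]
      _ = x * ((s * y) * (s * x)) := by simp only [mul_assoc]
      _ = x * ((s * x) * (s * y)) := by rw [idem_comm _ _ hsy hsx]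
      _ = (x * s * x) * (s * y) := by simp only [mul_assoc]
      _ = x * (s * y) := by rw [hx2]
  have hB : x = (y * s) * x := by
    calc x = x * s * x := hx2.symm
      _ = (x * (s * y * s)) * x := by rw [hy1]
      _ = ((x * s) * (y * s)) * x := by simp only [mul_assoc]
      _ = ((y * s) * (x * s)) * x := by rw [idem_comm _ _ hxs hys]
      _ = (y * s) * ((x * s * x)) := by simp only [mul_assoc]
      _ = (y * s) * x := by rw [hx2]
  have hC : x * s = y * s := by
    calc x * s = ((y * s) * x) * s := by rw [← hB]
      _ = y * (s * x * s) := by simp only [mul_assoc]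
      _ = y * s := by rw [hx1]
  calc x = x * (s * y) := hA
    _ = (x * s) * y := by rw [mul_assoc]
    _ = (y * s) * y := by rw [hC]
    _ = y := by rw [mul_assoc] at hy2 ⊢; exact hy2.symm ▸ hy2

/-- Idempotents are self-adjoint. -/
lemma star_of_idem {S : Type*} [InverseSemigroup S] {e : S}
    (he : e * e = e) : star e = e := by
  refine invSg_unique (s := e) ?_ ?_ ?_ ?_
  · exact mul_star_mul_self e
  · exact star_mul_star_self e
  · rw [he, he]
  · rw [he, he]

theorem stmt2 {S : Type*} [InverseSemigroup S] (hE : EUnitary S)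
    (s t : S) (hst : sigmaEq s t) (χ : SemiChar (Idem S))
    (hs : χ.toFun ⟨star s * s, idem_star_mul s⟩ = true)
    (ht : χ.toFun ⟨star t * t, idem_star_mul t⟩ = true) :
    ∀ e : Idem S, χ.toFun (conjIdem s e) = χ.toFun (conjIdem t e) := by
  obtain ⟨e0, he0, hse⟩ := hst
  -- f := t * e0 * star t is idempotent
  have hf : (t * e0 * star t) * (t * e0 * star t) = t * e0 * star t := by
    have := idem_conj he0 (star t)
    simpa [star_star] using this
  -- u := s * star t satisfies u * f = f
  have huf : (s * star t) * (t * e0 * star t) = t * e0 * star t := by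
    have hc : (star t * t) * e0 = e0 * (star t * t) :=
      idem_comm _ _ (idem_star_mul t) he0
    calc (s * star t) * (t * e0 * star t)
        = s * ((star t * t) * e0) * star t := by simp only [mul_assoc]
      _ = s * (e0 * (star t * t)) * star t := by rw [hc]
      _ = (s * e0) * ((star t * t) * star t) := by simp only [mul_assoc]
      _ = (t * e0) * ((star t * t) * star t) := by rw [hse]
      _ = t * (e0 * ((star t * t) * star t)) := by rw [mul_assoc]
      _ = t * (e0 * star t) := by rw [star_mul_star_self]
      _ = t * e0 * star t := by rw [← mul_assoc]
  -- hence nle f u, so u is idempotent by E-unitarity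
  have hnle : nle (t * e0 * star t) (s * star t) := by
    unfold nle
    rw [star_of_idem hf, hf, huf]
  have hu : (s * star t) * (s * star t) = s * star t :=
    hE _ _ hf hnle
  have hcomm : t * star s = s * star t := by
    calc t * star s = star (s * star t) := by rw [star_mul, star_star]
      _ = s * star t := star_of_idem hu
  -- s * h = t * h for h := (star s * s) * (star t * t)
  set h : S := (star s * s) * (star t * t) with hh_def
  have hh : h * h = h := idem_mul (idem_star_mul s) (idem_star_mul t)
  have hstarh : star h = h := star_of_idem hh
  have h1 : s * h = s * (star t * t) := by
    calc s * h = (s * star s * s) * (star t * t) := by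
          rw [hh_def]; simp only [mul_assoc]
      _ = s * (star t * t) := by rw [mul_star_mul_self]
  have h2 : t * h = s * (star t * t) := by
    calc t * h = ((t * star s) * (s * star t)) * t := by
          rw [hh_def]; simp only [mul_assoc]
      _ = ((s * star t) * (s * star t)) * t := by rw [hcomm]
      _ = (s * star t) * t := by rw [hu]
      _ = s * (star t * t) := by rw [mul_assoc]
  have hsh : s * h = t * h := h1.trans h2.symm
  intro e
  have he1 : e.1 * e.1 = e.1 := e.2
  -- (star r * e.1 * r) * h = star (r*h) * e1 * (r*h) for r = s, t
  have side : ∀ r : S, (star r * e.1 * r) * h = star (r * h) * e.1 * (r * h) := by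
    intro r
    calc (star r * e.1 * r) * h = (star r * e.1 * r) * (h * h) := by rw [hh]
      _ = ((star r * e.1 * r) * h) * h := by simp only [mul_assoc]
      _ = (h * (star r * e.1 * r)) * h := by
          rw [idem_comm _ _ (idem_conj he1 r) hh]
      _ = (h * star r) * e.1 * (r * h) := by simp only [mul_assoc]
      _ = star (r * h) * e.1 * (r * h) := by rw [star_mul, hstarh]
  have key : (star s * e.1 * s) * h = (star t * e.1 * t) * h := by
    rw [side s, side t, hsh]
  -- now transfer to Idem S and apply χ
  set hI : Idem S := ⟨h, hh⟩ with hI_def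
  have keyI : conjIdem s e * hI = conjIdem t e * hI :=
    Subtype.ext key
  have hIsplit : hI = @HMul.hMul (Idem S) (Idem S) (Idem S) _
      ⟨star s * s, idem_star_mul s⟩ ⟨star t * t, idem_star_mul t⟩ := rfl
  have hχI : χ.toFun hI = true := by
    rw [hIsplit]
    exact (χ.map_mul' _ _).trans (by rw [hs, ht]; rfl)
  have := congrArg χ.toFun keyI
  rw [χ.map_mul', χ.map_mul', hχI, Bool.and_true, Bool.and_true] at this
  exact this
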